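/- arXiv:2305.00544 — 2 statements merged into one kernel-verified Lean document; each statement's English description precedes it below -/
import Mathlib

section
/- For any reals c_1, ..., c_L with 0 ≤ c_j ≤ B for all j and Σ_j c_j ≤ M, the quantity D(c) = Σ_{j=1}^L (2/M) max(c_j - 2^{L-j}, 0) + (2/M) max(M - Σ_j c_j - 1, 0) is minimized (over all such choices) by taking c_j according to the recursion c_1 = min(M/2, B), c_j = min((M - Σ_{k<j} c_k)/2, B), provided 2^L ≤ M and B ≥ 1. -/
/-- For integers `M ≥ 2`, `L ≥ 1` with `2^L ≤ M` and a real peak cost `B ≥ 1`: among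
all feasible `c'` (with `0 ≤ c' j ≤ B` for `j ∈ [1, L]` and `∑_j c' j ≤ M`), the
distortion
`D(c) = ∑_{j=1}^{L} (2/M) * max (c j - 2^(L-j)) 0 + (2/M) * max (M - ∑_j c j - 1) 0`
is minimized by the greedy recursion `c 1 = min (M/2) B`,
`c j = min ((M - ∑_{k<j} c k)/2) B`. -/
theorem stmt8 (M L : ℕ) (hM : 2 ≤ M) (hL : 1 ≤ L) (hML : 2 ^ L ≤ M)
    (B : ℝ) (hB : 1 ≤ B)
    (c : ℕ → ℝ) (hc1 : c 1 = min ((M : ℝ) / 2) B)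
    (hcj : ∀ j, 1 < j → j ≤ L →
      c j = min (((M : ℝ) - ∑ k ∈ Finset.Icc 1 (j - 1), c k) / 2) B)
    (c' : ℕ → ℝ) (hc'0 : ∀ j ∈ Finset.Icc 1 L, 0 ≤ c' j)
    (hc'B : ∀ j ∈ Finset.Icc 1 L, c' j ≤ B)
    (hc'sum : ∑ j ∈ Finset.Icc 1 L, c' j ≤ (M : ℝ)) :
    (∑ j ∈ Finset.Icc 1 L, (2 / (M : ℝ)) * max (c j - (2 : ℝ) ^ (L - j)) 0)
      + (2 / (M : ℝ)) * max ((M : ℝ) - (∑ j ∈ Finset.Icc 1 L, c j) - 1) 0 ≤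
    (∑ j ∈ Finset.Icc 1 L, (2 / (M : ℝ)) * max (c' j - (2 : ℝ) ^ (L - j)) 0)
      + (2 / (M : ℝ)) * max ((M : ℝ) - (∑ j ∈ Finset.Icc 1 L, c' j) - 1) 0 := by
  have h2L : (2:ℝ)^L ≤ (M:ℝ) := by exact_mod_cast hML
  -- auxiliary real fact
  have lem : ∀ a x : ℝ, a ≤ x → max (min x B - a) 0 = min x B - min B a := by
    intro a x hax
    rcases le_total B a with h | h
    · rw [min_eq_left h, min_eq_right (le_trans h hax)]
      simpa using h
    · rw [min_eq_right h]
      have : a ≤ min x B := le_min hax h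
      rw [max_eq_left (by linarith)]
  -- uniform recursion
  have hrec : ∀ j, 1 ≤ j → j ≤ L →
      c j = min (((M:ℝ) - ∑ k ∈ Finset.Icc 1 (j-1), c k) / 2) B := by
    intro j h1 h2
    rcases eq_or_lt_of_le h1 with h | h
    · have hj : j = 1 := h.symm
      subst hj
      rw [show Finset.Icc 1 0 = (∅ : Finset ℕ) from Finset.Icc_eq_empty (by omega)]
      simpa using hc1
    · exact hcj j h h2
  -- remaining mass bound
  have hR : ∀ j, j ≤ L → (M:ℝ) / 2^j ≤ (M:ℝ) - ∑ k ∈ Finset.Icc 1 j, c k := by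
    intro j
    induction j with
    | zero =>
      intro _
      rw [show Finset.Icc 1 0 = (∅ : Finset ℕ) from Finset.Icc_eq_empty (by omega)]
      simp
    | succ n ih =>
      intro hn
      have hih := ih (by omega)
      have hsum : ∑ k ∈ Finset.Icc 1 (n+1), c k
          = (∑ k ∈ Finset.Icc 1 n, c k) + c (n+1) :=
        Finset.sum_Icc_succ_top (by omega) c
      have hc : c (n+1) = min (((M:ℝ) - ∑ k ∈ Finset.Icc 1 n, c k)/2) B := by
        simpa using hrec (n+1) (by omega) hn
      have hle : c (n+1) ≤ ((M:ℝ) - ∑ k ∈ Finset.Icc 1 n, c k)/2 := by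
        rw [hc]; exact min_le_left _ _
      have hpow : (M:ℝ)/2^(n+1) = ((M:ℝ)/2^n)/2 := by
        rw [pow_succ, div_div]
      rw [hsum, hpow]
      linarith
  -- greedy terms are exactly c j - min B (2^(L-j))
  have hKey : ∀ j ∈ Finset.Icc 1 L,
      max (c j - (2:ℝ)^(L-j)) 0 = c j - min B ((2:ℝ)^(L-j)) := by
    intro j hj
    rw [Finset.mem_Icc] at hj
    obtain ⟨h1, h2⟩ := hj
    have hRj := hR (j-1) (by omega)
    have hpow : (2:ℝ)^L = 2^(j-1) * (2^(L-j) * 2) := by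
      rw [← pow_succ, ← pow_add]
      congr 1
      omega
    have hp2 : (2:ℝ)^(L-j) * 2 ≤ ((M:ℝ) - ∑ k ∈ Finset.Icc 1 (j-1), c k) := by
      have hq : (2:ℝ)^(L-j) * 2 ≤ (M:ℝ)/2^(j-1) := by
        rw [le_div_iff₀ (by positivity)]
        calc (2:ℝ)^(L-j) * 2 * 2^(j-1) = 2^(j-1) * (2^(L-j)*2) := by ring
        _ = 2^L := hpow.symm
        _ ≤ M := h2L
      linarith
    have ha : (2:ℝ)^(L-j) ≤ ((M:ℝ) - ∑ k ∈ Finset.Icc 1 (j-1), c k)/2 := by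
      linarith
    rw [hrec j h1 h2]
    exact lem _ _ ha
  -- greedy last term
  have hSL := hR L le_rfl
  have h1M : (1:ℝ) ≤ (M:ℝ)/2^L := by
    rw [le_div_iff₀ (by positivity)]
    linarith
  have hlast : max ((M:ℝ) - (∑ j ∈ Finset.Icc 1 L, c j) - 1) 0
      = (M:ℝ) - (∑ j ∈ Finset.Icc 1 L, c j) - 1 :=
    max_eq_left (by linarith)
  -- termwise lower bounds for c'
  have hRterm : ∀ j ∈ Finset.Icc 1 L,
      c' j - min B ((2:ℝ)^(L-j)) ≤ max (c' j - (2:ℝ)^(L-j)) 0 := by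
    intro j hj
    rcases min_cases B ((2:ℝ)^(L-j)) with ⟨hm, hm2⟩ | ⟨hm, hm2⟩
    · rw [hm]
      have := hc'B j hj
      exact le_trans (by linarith) (le_max_right _ 0)
    · rw [hm]; exact le_max_left _ _
  have hsumL : ∑ j ∈ Finset.Icc 1 L, max (c j - (2:ℝ)^(L-j)) 0
      = (∑ j ∈ Finset.Icc 1 L, c j)
        - ∑ j ∈ Finset.Icc 1 L, min B ((2:ℝ)^(L-j)) := by
    rw [← Finset.sum_sub_distrib]
    exact Finset.sum_congr rfl hKey
  have hsumR : (∑ j ∈ Finset.Icc 1 L, c' j)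
        - (∑ j ∈ Finset.Icc 1 L, min B ((2:ℝ)^(L-j)))
      ≤ ∑ j ∈ Finset.Icc 1 L, max (c' j - (2:ℝ)^(L-j)) 0 := by
    rw [← Finset.sum_sub_distrib]
    exact Finset.sum_le_sum hRterm
  have hRlast : (M:ℝ) - (∑ j ∈ Finset.Icc 1 L, c' j) - 1
      ≤ max ((M:ℝ) - (∑ j ∈ Finset.Icc 1 L, c' j) - 1) 0 := le_max_left _ _
  rw [← Finset.mul_sum, ← Finset.mul_sum, ← mul_add, ← mul_add]
  apply mul_le_mul_of_nonneg_left _ (by positivity)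
  rw [hsumL, hlast]
  linarith
end

section
/- Lower bound via Jensen for adaptive search: for any adaptive strategy with query sets of size at most B, the total distortion (2/M)Σ_{y^L} max(|B_{y^L}| - 1, 0) is at least Σ_{k=1}^L (2/M)·max(c̃_k - 2^{L-k}, 0) + (2/M)·max(M - Σ_k c̃_k - 1, 0), where c̃_k = Σ_{y^L ∈ β_k} |B_{y^L}| and c̃_k ≤ B. -/
/-- Posterior support of an adaptive query strategy: states consistent with the
answer sequence `y`. -/
def consistentSet (M L : ℕ) (A : (j : Fin L) → (Fin (j : ℕ) → Bool) → Finset (Fin M))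
    (y : Fin L → Bool) : Finset (Fin M) :=
  Finset.univ.filter (fun s => ∀ j : Fin L,
    (s ∈ A j (fun i => y ⟨(i : ℕ), i.isLt.trans j.isLt⟩)) ↔ y j = true)

variable {M L : ℕ}

def ansF (A : (j : Fin L) → (Fin (j : ℕ) → Bool) → Finset (Fin M)) (s : Fin M) : ℕ → Bool
  | n => if h : n < L then decide (s ∈ A ⟨n, h⟩ (fun i => ansF A s i)) else false
  termination_by n => n
  decreasing_by all_goals exact i.isLt

lemma ansF_eq (A : (j : Fin L) → (Fin (j : ℕ) → Bool) → Finset (Fin M)) (s : Fin M)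
    (n : ℕ) (h : n < L) :
    ansF A s n = decide (s ∈ A ⟨n, h⟩ (fun i => ansF A s i)) := by
  rw [ansF, dif_pos h]

lemma mem_consistentSet_iff (A : (j : Fin L) → (Fin (j : ℕ) → Bool) → Finset (Fin M))
    (s : Fin M) (y : Fin L → Bool) :
    s ∈ consistentSet M L A y ↔ ∀ j : Fin L, y j = ansF A s (j : ℕ) := by
  simp only [consistentSet, Finset.mem_filter, Finset.mem_univ, true_and]
  constructor
  · intro h j
    rcases j with ⟨n, hn⟩
    induction n using Nat.strong_induction_on with
    | _ n IH =>
      have hpre : (fun i : Fin n => y ⟨(i : ℕ), i.isLt.trans hn⟩)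
          = fun i : Fin n => ansF A s (i : ℕ) := by
        funext i; exact IH i i.isLt (i.isLt.trans hn)
      have h2 := h ⟨n, hn⟩
      show y ⟨n, hn⟩ = ansF A s n
      rw [ansF_eq A s n hn, ← hpre]
      cases hy : y ⟨n, hn⟩ with
      | false => simp [hy] at h2; simp [h2]
      | true => simp [hy] at h2; simp [h2]
  · intro h j
    have hpre : (fun i : Fin (j:ℕ) => y ⟨(i : ℕ), i.isLt.trans j.isLt⟩)
        = fun i : Fin (j:ℕ) => ansF A s (i : ℕ) := by
      funext i; exact h ⟨(i:ℕ), i.isLt.trans j.isLt⟩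
    rw [hpre, h j, ansF_eq A s (j:ℕ) j.isLt, Fin.eta]
    simp

def ansFun (A : (j : Fin L) → (Fin (j : ℕ) → Bool) → Finset (Fin M)) (s : Fin M) :
    Fin L → Bool := fun j => ansF A s (j : ℕ)

lemma consistentSet_eq_fiber (A : (j : Fin L) → (Fin (j : ℕ) → Bool) → Finset (Fin M))
    (y : Fin L → Bool) :
    consistentSet M L A y = Finset.univ.filter (fun s => ansFun A s = y) := by
  ext s
  simp only [mem_consistentSet_iff, Finset.mem_filter, Finset.mem_univ, true_and,
    funext_iff, ansFun]
  exact ⟨fun h j => (h j).symm, fun h j => (h j).symm⟩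

lemma consistentSet_disjoint (A : (j : Fin L) → (Fin (j : ℕ) → Bool) → Finset (Fin M))
    {y y' : Fin L → Bool} (h : y ≠ y') :
    Disjoint (consistentSet M L A y) (consistentSet M L A y') := by
  simp only [consistentSet_eq_fiber, Finset.disjoint_left, Finset.mem_filter]
  rintro s ⟨-, h1⟩ ⟨-, h2⟩
  exact h (h1 ▸ h2 ▸ rfl)

lemma sum_card_consistentSet (A : (j : Fin L) → (Fin (j : ℕ) → Bool) → Finset (Fin M)) :
    ∑ y : Fin L → Bool, (consistentSet M L A y).card = M := by
  simp_rw [consistentSet_eq_fiber]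
  rw [← Finset.card_eq_sum_card_fiberwise (fun s _ => Finset.mem_univ (ansFun A s))]
  simp

lemma claimA (A : (j : Fin L) → (Fin (j : ℕ) → Bool) → Finset (Fin M)) {B : ℕ}
    (hA : ∀ j h, (A j h).card ≤ B) (k : Fin L) :
    ∑ y ∈ Finset.univ.filter (fun y : Fin L → Bool =>
        (∀ j, j < k → y j = false) ∧ y k = true),
      (consistentSet M L A y).card ≤ B := by
  rw [← Finset.card_biUnion]
  · refine le_trans (Finset.card_le_card ?_) (hA k (fun _ => false))
    intro s hs
    obtain ⟨y, hy, hsy⟩ := Finset.mem_biUnion.mp hs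
    simp only [Finset.mem_filter, Finset.mem_univ, true_and] at hy
    rw [mem_consistentSet_iff] at hsy
    have htrue : ansF A s (k : ℕ) = true := (hsy k).symm.trans hy.2
    rw [ansF_eq A s (k : ℕ) k.isLt, decide_eq_true_iff] at htrue
    have hpre : (fun i : Fin (k : ℕ) => ansF A s (i : ℕ)) = fun _ => false := by
      funext i
      rw [← hsy ⟨(i : ℕ), i.isLt.trans k.isLt⟩]
      exact hy.1 ⟨(i : ℕ), i.isLt.trans k.isLt⟩ (by simpa [Fin.lt_def] using i.isLt)
    rw [hpre] at htrue
    simpa using htrue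
  · intro y hy y' hy' hne
    exact consistentSet_disjoint A hne

lemma claimB (k : Fin L) :
    (Finset.univ.filter (fun y : Fin L → Bool =>
        (∀ j, j < k → y j = false) ∧ y k = true)).card ≤ 2 ^ (L - 1 - (k : ℕ)) := by
  have hcard : (Finset.univ : Finset (Fin (L - 1 - (k : ℕ)) → Bool)).card
      = 2 ^ (L - 1 - (k : ℕ)) := by
    rw [Finset.card_univ]; simp
  rw [← hcard]
  apply Finset.card_le_card_of_injOn
    (fun (y : Fin L → Bool) (i : Fin (L - 1 - (k : ℕ))) =>
      y ⟨(k : ℕ) + 1 + (i : ℕ), by have h1 := i.isLt; have h2 := k.isLt; omega⟩)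
    (fun _ _ => Finset.mem_univ _)
  intro y hy y' hy' heq
  simp only [Finset.coe_filter, Finset.mem_univ, true_and, Set.mem_setOf_eq] at hy hy'
  funext j
  rcases lt_trichotomy (j : ℕ) (k : ℕ) with hlt | heqq | hgt
  · rw [hy.1 j (Fin.lt_def.mpr hlt), hy'.1 j (Fin.lt_def.mpr hlt)]
  · have : j = k := Fin.ext heqq
    rw [this, hy.2, hy'.2]
  · have hi : (j : ℕ) - (k : ℕ) - 1 < L - 1 - (k : ℕ) := by have := j.isLt; omega
    have h2 := congrFun heq ⟨(j : ℕ) - (k : ℕ) - 1, hi⟩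
    convert h2 using 2 <;> exact Fin.ext (by simp; omega)

lemma claimC (A : (j : Fin L) → (Fin (j : ℕ) → Bool) → Finset (Fin M)) :
    (∑ k : Fin L, ∑ y ∈ Finset.univ.filter (fun y : Fin L → Bool =>
        (∀ j, j < k → y j = false) ∧ y k = true), (consistentSet M L A y).card)
      + (consistentSet M L A (fun _ => false)).card = M := by
  have hdisj : ((Finset.univ : Finset (Fin L)) : Set (Fin L)).PairwiseDisjoint
      (fun k => Finset.univ.filter (fun y : Fin L → Bool =>
        (∀ j, j < k → y j = false) ∧ y k = true)) := by
    intro k _ k' _ hne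
    simp only [Function.onFun]
    rw [Finset.disjoint_left]
    intro y hy hy'
    simp only [Finset.mem_filter, Finset.mem_univ, true_and] at hy hy'
    rcases hne.lt_or_gt with h | h
    · exact absurd (hy'.1 k h ▸ hy.2) (by simp)
    · exact absurd (hy.1 k' h ▸ hy'.2) (by simp)
  rw [← Finset.sum_biUnion hdisj]
  have h0 : (fun _ => false : Fin L → Bool) ∉
      (Finset.univ : Finset (Fin L)).biUnion (fun k => Finset.univ.filter
        (fun y : Fin L → Bool => (∀ j, j < k → y j = false) ∧ y k = true)) := by
    simp
  have huniv : insert (fun _ => false : Fin L → Bool)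
      ((Finset.univ : Finset (Fin L)).biUnion (fun k => Finset.univ.filter
        (fun y : Fin L → Bool => (∀ j, j < k → y j = false) ∧ y k = true)))
      = Finset.univ := by
    ext y
    simp only [Finset.mem_insert, Finset.mem_biUnion, Finset.mem_filter, Finset.mem_univ,
      true_and, iff_true]
    by_cases hy : y = fun _ => false
    · left; exact hy
    · right
      have hne : (Finset.univ.filter (fun j => y j = true)).Nonempty := by
        rw [Finset.filter_nonempty_iff]
        by_contra hcon
        push_neg at hcon
        apply hy
        funext j
        simpa using hcon j (Finset.mem_univ _)
      refine ⟨(Finset.univ.filter (fun j => y j = true)).min' hne, fun j hj => ?_, ?_⟩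
      · by_contra hjt
        have hjm : j ∈ Finset.univ.filter (fun j => y j = true) := by
          simp only [Finset.mem_filter, Finset.mem_univ, true_and]
          cases hyy : y j with
          | false => exact absurd hyy hjt
          | true => rfl
        exact absurd (Finset.min'_le _ j hjm) (not_le.mpr hj)
      · exact (Finset.mem_filter.mp (Finset.min'_mem _ hne)).2
  calc (∑ y ∈ _, (consistentSet M L A y).card) + (consistentSet M L A (fun _ => false)).card
      = ∑ y ∈ insert (fun _ => false : Fin L → Bool)
          ((Finset.univ : Finset (Fin L)).biUnion (fun k => Finset.univ.filter
            (fun y : Fin L → Bool => (∀ j, j < k → y j = false) ∧ y k = true))),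
          (consistentSet M L A y).card := by rw [Finset.sum_insert h0, add_comm]
    _ = ∑ y : Fin L → Bool, (consistentSet M L A y).card := by rw [huniv]
    _ = M := sum_card_consistentSet A

lemma claimC' (f : (Fin L → Bool) → ℝ) (hf : ∀ y, 0 ≤ f y) :
    (∑ k : Fin L, ∑ y ∈ Finset.univ.filter (fun y : Fin L → Bool =>
        (∀ j, j < k → y j = false) ∧ y k = true), f y)
      + f (fun _ => false) ≤ ∑ y : Fin L → Bool, f y := by
  have hdisj : ((Finset.univ : Finset (Fin L)) : Set (Fin L)).PairwiseDisjoint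
      (fun k => Finset.univ.filter (fun y : Fin L → Bool =>
        (∀ j, j < k → y j = false) ∧ y k = true)) := by
    intro k _ k' _ hne
    simp only [Function.onFun]
    rw [Finset.disjoint_left]
    intro y hy hy'
    simp only [Finset.mem_filter, Finset.mem_univ, true_and] at hy hy'
    rcases hne.lt_or_gt with h | h
    · exact absurd (hy'.1 k h ▸ hy.2) (by simp)
    · exact absurd (hy.1 k' h ▸ hy'.2) (by simp)
  rw [← Finset.sum_biUnion hdisj]
  have h0 : (fun _ => false : Fin L → Bool) ∉
      (Finset.univ : Finset (Fin L)).biUnion (fun k => Finset.univ.filter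
        (fun y : Fin L → Bool => (∀ j, j < k → y j = false) ∧ y k = true)) := by
    simp
  calc (∑ y ∈ _, f y) + f (fun _ => false)
      = ∑ y ∈ insert (fun _ => false : Fin L → Bool)
          ((Finset.univ : Finset (Fin L)).biUnion (fun k => Finset.univ.filter
            (fun y : Fin L → Bool => (∀ j, j < k → y j = false) ∧ y k = true))),
          f y := by rw [Finset.sum_insert h0, add_comm]
    _ ≤ ∑ y : Fin L → Bool, f y :=
        Finset.sum_le_sum_of_subset_of_nonneg (Finset.subset_univ _)
          (fun y _ _ => hf y)

/-- Lower bound via Jensen for adaptive search: for any adaptive strategy with query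
sets of size at most `B`, letting `c̃ k = ∑_{y ∈ β k} |B_y|` (with `β k` the set of
answer sequences whose first `1` is at position `k`, zero-indexed), we have
`c̃ k ≤ B` for every `k`, and the total distortion
`(2/M) ∑_y max (|B_y| - 1) 0` is at least
`∑ k (2/M) max (c̃ k - 2^(L-1-k)) 0 + (2/M) max (M - ∑ k c̃ k - 1) 0`. -/
theorem stmt17 (M L B : ℕ) (hM : 0 < M) (hL : 0 < L) (hB : 0 < B)
    (A : (j : Fin L) → (Fin (j : ℕ) → Bool) → Finset (Fin M))
    (hA : ∀ j h, (A j h).card ≤ B) :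
    (∀ k : Fin L,
      (∑ y ∈ Finset.univ.filter (fun y : Fin L → Bool =>
          (∀ j, j < k → y j = false) ∧ y k = true),
        ((consistentSet M L A y).card : ℝ)) ≤ (B : ℝ)) ∧
    (∑ k : Fin L, (2 / (M : ℝ)) *
        max ((∑ y ∈ Finset.univ.filter (fun y : Fin L → Bool =>
            (∀ j, j < k → y j = false) ∧ y k = true),
          ((consistentSet M L A y).card : ℝ)) - (2 : ℝ) ^ (L - 1 - (k : ℕ))) 0)
      + (2 / (M : ℝ)) *
        max ((M : ℝ) - (∑ k : Fin L,
            ∑ y ∈ Finset.univ.filter (fun y : Fin L → Bool =>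
              (∀ j, j < k → y j = false) ∧ y k = true),
          ((consistentSet M L A y).card : ℝ)) - 1) 0
      ≤ (2 / (M : ℝ)) * ∑ y : Fin L → Bool,
          max (((consistentSet M L A y).card : ℝ) - 1) 0 := by
  set β : Fin L → Finset (Fin L → Bool) := fun k => Finset.univ.filter
    (fun y : Fin L → Bool => (∀ j, j < k → y j = false) ∧ y k = true) with hβ
  set g : (Fin L → Bool) → ℝ :=
    fun y => max (((consistentSet M L A y).card : ℝ) - 1) 0 with hg
  constructor
  · intro k
    rw [← Nat.cast_sum]
    exact_mod_cast claimA A hA k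
  · have key1 : ∀ k : Fin L,
        max ((∑ y ∈ β k, ((consistentSet M L A y).card : ℝ))
          - (2 : ℝ) ^ (L - 1 - (k : ℕ))) 0 ≤ ∑ y ∈ β k, g y := by
      intro k
      apply max_le
      · have h1 : ((β k).card : ℝ) ≤ (2 : ℝ) ^ (L - 1 - (k : ℕ)) := by
          exact_mod_cast claimB k
        have h2 : (∑ y ∈ β k, (((consistentSet M L A y).card : ℝ) - 1))
            = (∑ y ∈ β k, ((consistentSet M L A y).card : ℝ)) - ((β k).card : ℝ) := by
          rw [Finset.sum_sub_distrib, Finset.sum_const, nsmul_eq_mul, mul_one]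
        have h3 : (∑ y ∈ β k, (((consistentSet M L A y).card : ℝ) - 1))
            ≤ ∑ y ∈ β k, g y :=
          Finset.sum_le_sum (fun y _ => le_max_left _ _)
        linarith
      · exact Finset.sum_nonneg (fun y _ => le_max_right _ _)
    have key3 : max ((M : ℝ) - (∑ k : Fin L,
          ∑ y ∈ β k, ((consistentSet M L A y).card : ℝ)) - 1) 0
        ≤ g (fun _ => false) := by
      apply max_le
      · have hc := claimC A
        have hc' : (∑ k : Fin L, ∑ y ∈ β k, ((consistentSet M L A y).card : ℝ))
            + ((consistentSet M L A (fun _ => false)).card : ℝ) = (M : ℝ) := by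
          exact_mod_cast hc
        have := le_max_left (((consistentSet M L A (fun _ => false)).card : ℝ) - 1) 0
        rw [hg]
        dsimp only
        linarith
      · exact le_max_right _ _
    have key2 := claimC' g (fun y => le_max_right _ _)
    have core : (∑ k : Fin L,
          max ((∑ y ∈ β k, ((consistentSet M L A y).card : ℝ))
            - (2 : ℝ) ^ (L - 1 - (k : ℕ))) 0)
        + max ((M : ℝ) - (∑ k : Fin L,
            ∑ y ∈ β k, ((consistentSet M L A y).card : ℝ)) - 1) 0
        ≤ ∑ y : Fin L → Bool, g y := by
      calc _ ≤ (∑ k : Fin L, ∑ y ∈ β k, g y) + g (fun _ => false) :=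
            add_le_add (Finset.sum_le_sum (fun k _ => key1 k)) key3
        _ ≤ ∑ y : Fin L → Bool, g y := key2
    rw [← Finset.mul_sum, ← mul_add]
    exact mul_le_mul_of_nonneg_left core (by positivity)
end
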